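/- For the linear advection equation with a > 0, the forward-Euler scheme with second-order upwind flux ûᵢ₊₁/₂ = (3/2)uᵢ − (1/2)uᵢ₋₁ reads uᵢⁿ⁺¹ = uᵢⁿ − aλ[(3/2)(uᵢ − uᵢ₋₁) − (1/2)(uᵢ₋₁ − uᵢ₋₂)]. If 0 < aλ ≤ 1/2 and the ratio rᵢ₋₁ = (uᵢ₋₁ − uᵢ₋₂)/(uᵢ − uᵢ₋₁) satisfies −(2 − 3aλ)/(aλ) ≤ rᵢ₋₁ < 3 (with uᵢ − uᵢ₋₁ ≠ 0), then uᵢⁿ⁺¹ lies between min(uᵢ₋₁ⁿ, uᵢⁿ) and max(uᵢ₋₁ⁿ, uᵢⁿ). -/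

import Mathlib

theorem upwind_flux_nonoscillatory (a lam umm um u0 : ℝ)
    (ha : 0 < a) (hlam : 0 < a * lam) (hcfl : a * lam ≤ 1 / 2)
    (hΔ : u0 - um ≠ 0)
    (hrl : -(2 - 3 * (a * lam)) / (a * lam) ≤ (um - umm) / (u0 - um))
    (hru : (um - umm) / (u0 - um) < 3) :
    u0 - a * lam * ((3 / 2) * (u0 - um) - (1 / 2) * (um - umm)) ∈
      Set.Icc (min um u0) (max um u0) := by
  set c := a * lam with hc
  set r := (um - umm) / (u0 - um) with hr
  have hd : um - umm = r * (u0 - um) := by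
    rw [hr]; exact (div_mul_cancel₀ _ hΔ).symm
  have hrl' : -(2 - 3 * c) ≤ r * c := (div_le_iff₀ hlam).mp hrl
  rcases hΔ.lt_or_gt with h | h
  · have key := mul_pos (mul_pos hlam (neg_pos.mpr h)) (sub_pos.mpr hru)
    constructor
    · rcases min_cases um u0 with ⟨he, _⟩ | ⟨he, _⟩ <;> rw [he] <;>
        nlinarith [mul_pos hlam (neg_pos.mpr h)]
    · rcases max_cases um u0 with ⟨he, _⟩ | ⟨he, _⟩ <;> rw [he] <;>
        nlinarith [mul_pos hlam (neg_pos.mpr h)]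
  · have key := mul_pos (mul_pos hlam h) (sub_pos.mpr hru)
    constructor
    · rcases min_cases um u0 with ⟨he, _⟩ | ⟨he, _⟩ <;> rw [he] <;>
        nlinarith [mul_pos hlam h]
    · rcases max_cases um u0 with ⟨he, _⟩ | ⟨he, _⟩ <;> rw [he] <;>
        nlinarith [mul_pos hlam h]
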